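/- Let n ≥ 1 and d ≥ 1 be natural numbers and let x ∈ ℤⁿ be a vector whose entries are collectively coprime (their gcd is 1). Let L be the subgroup of ℤⁿ generated by the vectors d·e₁, …, d·eₙ together with x. Then the index of L in ℤⁿ equals d^(n−1). -/
import Mathlib

theorem sa_lattice_index (n d : ℕ) (hn : 1 ≤ n) (hd : 1 ≤ d) (x : Fin n → ℤ)
    (hx : Finset.univ.gcd x = 1) :
    Nat.card ((Fin n → ℤ) ⧸
        Submodule.span ℤ
          (insert x (Set.range fun i : Fin n => (d : ℤ) • Pi.single i 1))) =
      d ^ (n - 1) := by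
  haveI : NeZero d := ⟨by omega⟩
  set f : (Fin n → ℤ) →ₗ[ℤ] (Fin n → ZMod d) :=
    LinearMap.pi fun i =>
      (Int.castAddHom (ZMod d)).toIntLinearMap.comp (LinearMap.proj i) with hfdef
  have hfapp : ∀ (v : Fin n → ℤ) i, f v i = ((v i : ℤ) : ZMod d) := fun v i => rfl
  -- kernel of f
  have hker : LinearMap.ker f =
      Submodule.span ℤ (Set.range fun i : Fin n => (d : ℤ) • Pi.single i 1) := by
    apply le_antisymm
    · intro v hv
      have hdvd : ∀ i, (d : ℤ) ∣ v i := by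
        intro i
        have h0 : ((v i : ℤ) : ZMod d) = 0 := congrFun (LinearMap.mem_ker.mp hv) i
        exact (ZMod.intCast_zmod_eq_zero_iff_dvd _ _).mp h0
      have hv' : v = ∑ i, (v i / d) • ((d : ℤ) • Pi.single i 1) := by
        funext j
        rw [Finset.sum_apply]
        have : ∀ i, ((v i / d) • ((d : ℤ) • (Pi.single i 1 : Fin n → ℤ))) j
            = if j = i then v i else 0 := by
          intro i
          simp only [Pi.smul_apply, Pi.single_apply, smul_eq_mul]
          split
          · rename_i h
            subst h
            rw [mul_one]
            rw [mul_comm]; exact Int.mul_ediv_cancel' (hdvd j)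
          · ring
        simp only [this, Finset.sum_ite_eq, Finset.mem_univ, if_true]
      rw [hv']
      exact Submodule.sum_mem _ fun i _ =>
        Submodule.smul_mem _ _ (Submodule.subset_span ⟨i, rfl⟩)
    · rw [Submodule.span_le]
      rintro w ⟨i, rfl⟩
      rw [SetLike.mem_coe, LinearMap.mem_ker]
      funext j
      rw [Pi.zero_apply, hfapp]
      simp only [Pi.smul_apply, Pi.single_apply, smul_eq_mul]
      rw [ZMod.intCast_zmod_eq_zero_iff_dvd]
      exact Dvd.intro _ rfl
  -- surjectivity of f
  have fsurj : Function.Surjective f := by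
    intro y
    choose g hg using fun i => ZMod.intCast_surjective (y i)
    exact ⟨g, funext fun i => hg i⟩
  -- L = comap f (span {f x})
  have hL : Submodule.span ℤ (insert x (Set.range fun i : Fin n => (d : ℤ) • Pi.single i 1))
      = Submodule.comap f (Submodule.span ℤ {f x}) := by
    apply le_antisymm
    · rw [Submodule.span_le]
      intro v hv
      rw [Set.mem_insert_iff] at hv
      rcases hv with rfl | hv
      · exact Submodule.subset_span rfl
      · have h1 : v ∈ LinearMap.ker f := hker ▸ Submodule.subset_span hv
        rw [SetLike.mem_coe, Submodule.mem_comap, LinearMap.mem_ker.mp h1]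
        exact Submodule.zero_mem _
    · intro v hv
      rw [Submodule.mem_comap] at hv
      obtain ⟨c, hc⟩ := Submodule.mem_span_singleton.mp hv
      have h1 : v - c • x ∈ LinearMap.ker f := by
        rw [LinearMap.mem_ker, map_sub, map_smul, hc, sub_self]
      have h2 : v - c • x ∈ Submodule.span ℤ
          (insert x (Set.range fun i : Fin n => (d : ℤ) • Pi.single i 1)) :=
        Submodule.span_mono (Set.subset_insert _ _) (hker ▸ h1)
      have h3 : c • x ∈ Submodule.span ℤ
          (insert x (Set.range fun i : Fin n => (d : ℤ) • Pi.single i 1)) :=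
        Submodule.smul_mem _ _ (Submodule.subset_span (Set.mem_insert _ _))
      have := Submodule.add_mem _ h2 h3
      rwa [sub_add_cancel] at this
  -- addOrderOf (f x) = d
  have horder : addOrderOf (f x) = d := by
    have h1 : addOrderOf (f x) ∣ d := by
      apply addOrderOf_dvd_of_nsmul_eq_zero
      funext i
      rw [Pi.smul_apply, Pi.zero_apply, hfapp, nsmul_eq_mul, ZMod.natCast_self, zero_mul]
    have h2 : d ∣ addOrderOf (f x) := by
      set o := addOrderOf (f x) with ho
      have hzero : o • f x = 0 := addOrderOf_nsmul_eq_zero (f x)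
      have hdvd : ∀ i, (d : ℤ) ∣ (o : ℤ) * x i := by
        intro i
        have h0 : ((((o : ℤ) * x i : ℤ)) : ZMod d) = 0 := by
          have hi := congrFun hzero i
          rw [Pi.smul_apply, Pi.zero_apply, hfapp, nsmul_eq_mul] at hi
          push_cast
          exact hi
        exact (ZMod.intCast_zmod_eq_zero_iff_dvd _ _).mp h0
      have hgcd : (d : ℤ) ∣ Finset.univ.gcd (fun i => (o : ℤ) * x i) :=
        Finset.dvd_gcd fun i _ => hdvd i
      rw [Finset.gcd_mul_left, hx, mul_one] at hgcd
      have : (d : ℤ) ∣ (o : ℤ) := hgcd.trans (normalize_dvd_iff.mpr dvd_rfl)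
      exact_mod_cast this
    exact Nat.dvd_antisymm h1 h2
  -- now compute the index
  rw [hL]
  have key : Nat.card ((Fin n → ℤ) ⧸ Submodule.comap f (Submodule.span ℤ {f x}))
      = (Submodule.comap f (Submodule.span ℤ {f x})).toAddSubgroup.index := rfl
  rw [key]
  have hcomap : (Submodule.comap f (Submodule.span ℤ {f x})).toAddSubgroup
      = AddSubgroup.comap f.toAddMonoidHom (Submodule.span ℤ {f x}).toAddSubgroup := rfl
  rw [hcomap, AddSubgroup.index_comap_of_surjective _ fsurj]
  have hsub : (Submodule.span ℤ {f x}).toAddSubgroup = AddSubgroup.zmultiples (f x) := by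
    ext v
    simp [Submodule.mem_span_singleton, AddSubgroup.mem_zmultiples_iff]
  rw [hsub]
  have hcardH : Nat.card (AddSubgroup.zmultiples (f x)) = d := by
    rw [Nat.card_zmultiples, horder]
  have hcardG : Nat.card (Fin n → ZMod d) = d ^ n := by
    simp [Nat.card_eq_fintype_card, ZMod.card]
  have := AddSubgroup.index_mul_card (AddSubgroup.zmultiples (f x))
  rw [hcardH, hcardG] at this
  have hdpos : 0 < d := hd
  have : (AddSubgroup.zmultiples (f x)).index * d = d ^ (n - 1) * d := by
    rw [this, ← pow_succ, Nat.sub_add_cancel hn]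
  exact Nat.eq_of_mul_eq_mul_right hdpos this
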